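/- arXiv:2401.00022 — 6 statements merged into one kernel-verified Lean document; each statement's English description precedes it below -/
import Mathlib

section
/- Let $R$ be a finitely generated $\mathbb{N}$-graded algebra over a Noetherian ring $R_0$ which is an integral domain, $I$ a nonzero homogeneous ideal of $R$, and $P \in \mathrm{Ass}(R/I)$. Let $X_P = \{P_1 \in \mathrm{Ass}(R/I) : P \subsetneq P_1\}$ and let $Q$ be the product of the ideals in $X_P$ (with $Q = R$ if $X_P$ is empty). Then $v_P(I)$ equals the smallest $w \in \mathbb{N}$ such that the degree-$w$ graded component of the graded $R$-module $(I : P)/(I : (P + Q^\infty))$ is nonzero. -/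
private lemma colon_pow_mono' {R : Type*} [CommRing R] (I Q : Ideal R) :
    Monotone fun m : ℕ => I.colon ((Q ^ m : Ideal R) : Set R) := by
  intro m n h r hr
  rw [Submodule.mem_colon] at hr ⊢
  exact fun p hp => hr p (Ideal.pow_le_pow_right h hp)

private lemma key_colon_eq {R : Type*} [CommRing R] [IsNoetherianRing R]
    (I P Q : Ideal R) (hPprime : P.IsPrime)
    (hXQ : ∀ P' ∈ associatedPrimes R (R ⧸ I), P ≤ P' → ¬ Q ≤ P' → P' = P)
    (g : R) (hgP : g ∈ I.colon P) (hgQ : ∀ m : ℕ, g ∉ I.colon ((Q ^ m : Ideal R) : Set R)) :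
    I.colon (Ideal.span {g}) = P := by
  have hsmul : ∀ (J : Ideal R) (r c : R),
      r • (Ideal.Quotient.mk J c) = Ideal.Quotient.mk J (r * c) := by
    intro J r c
    rw [← smul_eq_mul, ← Ideal.Quotient.mk_eq_mk, ← Ideal.Quotient.mk_eq_mk,
      ← Submodule.Quotient.mk_smul]
  obtain ⟨N, hN⟩ := (monotone_stabilizes_iff_noetherian).mpr
    (inferInstance : IsNoetherian R R) ⟨fun m => I.colon ((Q ^ m : Ideal R) : Set R), colon_pow_mono' I Q⟩
  set S := I.colon ((Q ^ N : Ideal R) : Set R) with hSdef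
  have hSm : ∀ m, I.colon ((Q ^ m : Ideal R) : Set R) ≤ S := by
    intro m
    rcases le_total m N with h | h
    · exact colon_pow_mono' I Q h
    · exact le_of_eq (hN m h).symm
  have hIS : I ≤ S := by
    intro x hx
    rw [Submodule.mem_colon]
    intro p hp
    exact Ideal.mul_mem_right p _ hx
  have hgS : g ∉ S := hgQ N
  have hSQ : ∀ x : R, (∀ q ∈ Q, x * q ∈ S) → x ∈ S := by
    intro x hx
    refine hSm (N + 1) ?_
    rw [Submodule.mem_colon]
    intro p hp
    rw [pow_succ] at hp
    have hle : Q ^ N * Q ≤ I.colon (Ideal.span {x}) := by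
      rw [Ideal.mul_le]
      intro a ha b hb
      have h1 : x * b ∈ S := hx b hb
      have h2 := Submodule.mem_colon.mp h1 a ha
      rw [smul_eq_mul] at h2
      rw [Ideal.mem_colon_span_singleton, show a * b * x = x * b * a by ring]
      exact h2
    have := hle hp
    rw [Ideal.mem_colon_span_singleton] at this
    rwa [smul_eq_mul, mul_comm]
  have hgS0 : (Ideal.Quotient.mk S g : R ⧸ S) ≠ 0 := by
    rw [Ne, Ideal.Quotient.eq_zero_iff_mem]; exact hgS
  obtain ⟨P', hP'assoc, hP'le⟩ :=
    exists_le_isAssociatedPrime_of_isNoetherianRing R (Ideal.Quotient.mk S g) hgS0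
  obtain ⟨hP'prime, y, hy⟩ := isAssociatedPrime_iff.mp hP'assoc
  obtain ⟨c, rfl⟩ := Ideal.Quotient.mk_surjective y
  have hmem : ∀ r : R, r ∈ P' ↔ r * c ∈ S := by
    intro r
    rw [hy, Submodule.mem_colon_singleton, Submodule.mem_bot, hsmul, Ideal.Quotient.eq_zero_iff_mem]
  have hcS : c ∉ S := by
    intro h
    exact hP'prime.ne_top ((Ideal.eq_top_iff_one _).mpr ((hmem 1).mpr (by rwa [one_mul])))
  have hQP' : ¬ Q ≤ P' := by
    intro hQle
    exact hcS (hSQ c fun q hq => by rw [mul_comm]; exact (hmem q).mp (hQle hq))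
  obtain ⟨q₀, hq₀Q, hq₀P'⟩ := SetLike.not_le_iff_exists.mp hQP'
  have hqN : q₀ ^ N ∈ Q ^ N := Ideal.pow_mem_pow hq₀Q N
  have hqP' : q₀ ^ N ∉ P' := fun h => hq₀P' (hP'prime.mem_of_pow_mem N h)
  have hP'I : ∀ r : R, r ∈ P' ↔ r * (c * q₀ ^ N) ∈ I := by
    intro r
    constructor
    · intro hr
      have h1 : r * c ∈ S := (hmem r).mp hr
      have h2 := Submodule.mem_colon.mp h1 _ hqN
      rw [smul_eq_mul] at h2
      rwa [← mul_assoc]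
    · intro hr
      have h1 : (r * q₀ ^ N) * c ∈ S := by
        rw [show r * q₀ ^ N * c = r * (c * q₀ ^ N) by ring]
        exact hIS hr
      rcases hP'prime.mem_or_mem ((hmem _).mpr h1) with h | h
      · exact h
      · exact absurd h hqP'
  have hP'mem : P' ∈ associatedPrimes R (R ⧸ I) := by
    refine isAssociatedPrime_iff.mpr ⟨hP'prime, Ideal.Quotient.mk I (c * q₀ ^ N), ?_⟩
    ext r
    rw [Submodule.mem_colon_singleton, Submodule.mem_bot, hsmul, Ideal.Quotient.eq_zero_iff_mem]
    exact hP'I r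
  have hPleP' : P ≤ P' := by
    refine le_trans ?_ hP'le
    intro p hp
    rw [Submodule.mem_colon_singleton, Submodule.mem_bot, hsmul, Ideal.Quotient.eq_zero_iff_mem]
    have := Submodule.mem_colon.mp hgP p hp
    rw [smul_eq_mul] at this
    exact hIS (by rwa [mul_comm])
  have hP'P : P' = P := hXQ P' hP'mem hPleP' hQP'
  apply le_antisymm
  · intro r hr
    rw [Ideal.mem_colon_span_singleton] at hr
    have : r ∈ (Submodule.span R {(Ideal.Quotient.mk S g : R ⧸ S)}).annihilator := by
      rw [Submodule.mem_annihilator_span_singleton, hsmul, Ideal.Quotient.eq_zero_iff_mem]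
      exact hIS hr
    exact hP'P ▸ hP'le (by rw [Submodule.bot_colon']; exact this)
  · intro p hp
    rw [Ideal.mem_colon_span_singleton]
    have := Submodule.mem_colon.mp hgP p hp
    rwa [smul_eq_mul, mul_comm] at this



/-- Let `R` be a finitely generated `ℕ`-graded algebra over a Noetherian ring
`R₀`, with `R` a domain, `I` a nonzero homogeneous ideal and `P ∈ Ass(R/I)`. Let `XP` be the
(finite) set `{P₁ ∈ Ass(R/I) | P ⊊ P₁}` and `Q` the product of its elements (so `Q = R = ⊤`
if `XP = ∅`). Then `v_P(I)` equals the smallest `w` such that the degree-`w` component of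
`(I : P)/(I : (P + Q^∞))` is nonzero, i.e. the smallest `w` such that there is a homogeneous
element `g` of degree `w` with `g ∈ I : P` and `g ∉ I : (P + Q^∞)`, where membership in
`I : (P + Q^∞)` means `g ∈ I : P` and `g ∈ I : Q^m` for some `m`. -/
theorem v_invariant_eq_sInf_nonvanishing_degree
    {R₀ R : Type*} [CommRing R₀] [IsNoetherianRing R₀]
    [CommRing R] [IsDomain R] [Algebra R₀ R] [Algebra.FiniteType R₀ R]
    (𝒜 : ℕ → Submodule R₀ R) [GradedAlgebra 𝒜]
    (I : Ideal R) (hI0 : I ≠ ⊥) (hIhom : I.IsHomogeneous 𝒜)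
    (P : Ideal R) (hP : P ∈ associatedPrimes R (R ⧸ I))
    (XP : Finset (Ideal R))
    (hXP : (↑XP : Set (Ideal R)) = {P₁ | P₁ ∈ associatedPrimes R (R ⧸ I) ∧ P < P₁})
    (Q : Ideal R) (hQ : Q = ∏ p ∈ XP, p) :
    sInf {u : ℕ | ∃ f ∈ 𝒜 u, I.colon (Ideal.span {f}) = P}
      = sInf {w : ℕ | ∃ g ∈ 𝒜 w, g ∈ I.colon P ∧
          ¬ (g ∈ I.colon P ∧ ∃ m : ℕ, g ∈ I.colon ((Q ^ m : Ideal R) : Set R))} := by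
  haveI : IsNoetherianRing R := Algebra.FiniteType.isNoetherianRing R₀ R
  have hPprime : P.IsPrime := hP.isPrime
  have hXQ : ∀ P' ∈ associatedPrimes R (R ⧸ I), P ≤ P' → ¬ Q ≤ P' → P' = P := by
    intro P' hmem hle hnQ
    by_contra hne
    have hlt : P < P' := lt_of_le_of_ne hle (Ne.symm hne)
    have hx : P' ∈ (↑XP : Set (Ideal R)) := by rw [hXP]; exact ⟨hmem, hlt⟩
    exact hnQ (hQ ▸ le_trans Ideal.prod_le_inf (Finset.inf_le (Finset.mem_coe.mp hx)))
  congr 1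
  ext u
  simp only [Set.mem_setOf_eq]
  constructor
  · rintro ⟨f, hf, hcol⟩
    have hfP : f ∈ I.colon P := by
      rw [Submodule.mem_colon]
      intro p hp
      rw [← hcol] at hp
      rw [SetLike.mem_coe, Ideal.mem_colon_span_singleton] at hp
      rwa [smul_eq_mul, mul_comm]
    refine ⟨f, hf, hfP, ?_⟩
    rintro ⟨-, m, hm⟩
    have hQmP : Q ^ m ≤ P := by
      intro x hx
      rw [← hcol, Ideal.mem_colon_span_singleton]
      have := Submodule.mem_colon.mp hm x hx
      rwa [smul_eq_mul, mul_comm] at this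
    rcases Nat.eq_zero_or_pos m with rfl | hm0
    · rw [pow_zero, Ideal.one_eq_top] at hQmP
      exact hPprime.ne_top (top_le_iff.mp hQmP)
    · have hQP : Q ≤ P := (Ideal.IsPrime.pow_le_iff hm0.ne').mp hQmP
      rw [hQ] at hQP
      obtain ⟨p, hpXP, hpP⟩ := (Ideal.IsPrime.prod_le hPprime).mp hQP
      have : p ∈ (↑XP : Set (Ideal R)) := hpXP
      rw [hXP] at this
      exact absurd (lt_of_lt_of_le this.2 hpP) (lt_irrefl P)
  · rintro ⟨g, hg, hgP, hneg⟩
    refine ⟨g, hg, key_colon_eq I P Q hPprime hXQ g hgP ?_⟩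
    intro m hm
    exact hneg ⟨hgP, m, hm⟩
end

section
/- Let $R$ be a finitely generated $\mathbb{N}$-graded algebra over a Noetherian ring $R_0$ which is an integral domain, $I$ a nonzero homogeneous ideal of $R$, and $P \in \mathrm{Ass}(R/I)$. Let $X_P = \{P_1 \in \mathrm{Ass}(R/I) : P \subsetneq P_1\}$ and let $Q$ be the product of the ideals in $X_P$ (with $Q = R$ if $X_P$ is empty). If $f \in R$ satisfies $I : f = P$, then $f \in I : P$ and $f \notin I : (P + Q^\infty)$; in particular, $fQ^m \not\subseteq I$ for every $m \in \mathbb{N}$. -/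
/-- Setup as in the paper: `R` a finitely generated `ℕ`-graded algebra over a
Noetherian ring `R₀`, `R` a domain, `I` a nonzero homogeneous ideal, `P ∈ Ass(R/I)`, `XP` the
set `{P₁ ∈ Ass(R/I) | P ⊊ P₁}` and `Q` the product of its elements (`Q = R = ⊤` if `XP = ∅`).
If `f ∈ R` satisfies `I : f = P`, then `f ∈ I : P` and `f ∉ I : (P + Q^∞)`; in particular
`f Q^m ⊈ I` (i.e. `f ∉ I : Q^m`) for every `m ∈ ℕ`. -/
theorem notMem_colon_infty_of_colon_eq
    {R₀ R : Type*} [CommRing R₀] [IsNoetherianRing R₀]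
    [CommRing R] [IsDomain R] [Algebra R₀ R] [Algebra.FiniteType R₀ R]
    (𝒜 : ℕ → Submodule R₀ R) [GradedAlgebra 𝒜]
    (I : Ideal R) (hI0 : I ≠ ⊥) (hIhom : I.IsHomogeneous 𝒜)
    (P : Ideal R) (hP : P ∈ associatedPrimes R (R ⧸ I))
    (XP : Finset (Ideal R))
    (hXP : (↑XP : Set (Ideal R)) = {P₁ | P₁ ∈ associatedPrimes R (R ⧸ I) ∧ P < P₁})
    (Q : Ideal R) (hQ : Q = ∏ p ∈ XP, p)
    (f : R) (hf : I.colon (Ideal.span {f}) = P) :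
    f ∈ I.colon P ∧
      ¬ (f ∈ I.colon P ∧ ∃ m : ℕ, f ∈ I.colon ((Q ^ m : Ideal R) : Set R)) ∧
      ∀ m : ℕ, f ∉ I.colon ((Q ^ m : Ideal R) : Set R) := by
  have hPprime : P.IsPrime := hP.isPrime
  have h1 : f ∈ I.colon P := by
    rw [Submodule.mem_colon]
    intro p hp
    rw [SetLike.mem_coe, ← hf, Ideal.mem_colon_span_singleton] at hp
    simpa [mul_comm] using hp
  have h3 : ∀ m : ℕ, f ∉ I.colon ((Q ^ m : Ideal R) : Set R) := by
    intro m hm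
    have hQmP : Q ^ m ≤ P := by
      intro q hq
      rw [← hf, Ideal.mem_colon_span_singleton]
      have := Submodule.mem_colon.mp hm q hq
      simpa [mul_comm] using this
    rcases Nat.eq_zero_or_pos m with rfl | hm0
    · exact hPprime.ne_top (top_le_iff.mp (by simpa using hQmP))
    · have hQP : Q ≤ P := (Ideal.IsPrime.pow_le_iff hm0.ne' |>.mp hQmP)
      rw [hQ] at hQP
      obtain ⟨p, hpXP, hpP⟩ := (Ideal.IsPrime.prod_le hPprime).mp hQP
      have : P < p := by
        have := hXP ▸ (Finset.mem_coe.mpr hpXP)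
        exact this.2
      exact absurd (lt_of_lt_of_le this hpP) (lt_irrefl P)
  exact ⟨h1, fun h => by obtain ⟨-, m, hm⟩ := h; exact h3 m hm, h3⟩
end

section
/- Let $R$ be a finitely generated $\mathbb{N}$-graded algebra over a Noetherian ring $R_0$ which is an integral domain, $I$ a nonzero homogeneous ideal of $R$, and $P \in \mathrm{Ass}(R/I)$. Let $X_P = \{P_1 \in \mathrm{Ass}(R/I) : P \subsetneq P_1\}$ and let $Q$ be the product of the ideals in $X_P$ (with $Q = R$ if $X_P$ is empty). If $g \in R$ satisfies $g \in I : P$ and $g \notin I : (P + Q^\infty)$, then $I : g = P$. -/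
/-- Composing two colon-by-singleton operations gives the colon by the product. -/
private lemma colon_colon_singleton {R : Type*} [CommRing R] (I : Ideal R) (a b : R) :
    (I.colon (Ideal.span {a})).colon (Ideal.span {b}) = I.colon (Ideal.span {a * b}) := by
  ext x
  simp only [Ideal.mem_colon_span_singleton]
  rw [mul_comm a b, ← mul_assoc]

/-- In a Noetherian ring, for any ideal `J` and prime `p ⊇ J`, there is `y` such that
`J : y` is a prime ideal contained in `p`. (This is the associated prime of `R/J`
contained in `p`, obtained without localization.) -/
private lemma exists_prime_colon {R : Type*} [CommRing R] [hN : IsNoetherianRing R]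
    (J p : Ideal R) (hp : p.IsPrime) (hJp : J ≤ p) :
    ∃ y : R, (J.colon (Ideal.span {y})).IsPrime ∧ J.colon (Ideal.span {y}) ≤ p := by
  obtain ⟨q, ⟨y, rfl, hy⟩, hmax⟩ :=
    set_has_maximal_iff_noetherian.mpr hN
      {q : Ideal R | ∃ y : R, q = J.colon (Ideal.span {y}) ∧ ∀ t ∉ p, t * y ∉ J}
      ⟨J.colon (Ideal.span {(1 : R)}), 1, by rfl, fun t ht h => ht (hJp (by simpa using h))⟩
  -- the maximal such colon is contained in `p`
  have hle : J.colon (Ideal.span {y}) ≤ p := by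
    intro x hx
    by_contra hxp
    exact hy x hxp (Ideal.mem_colon_span_singleton.mp hx)
  refine ⟨y, ⟨?_, ?_⟩, hle⟩
  · -- not ⊤
    intro htop
    have h1 : (1 : R) ∈ J.colon (Ideal.span {y}) := htop ▸ Submodule.mem_top
    have hyJ : y ∈ J := by simpa using Ideal.mem_colon_span_singleton.mp h1
    exact hy 1 ((Ideal.ne_top_iff_one p).mp hp.ne_top) (by simpa using hyJ)
  · -- primeness
    intro a b hab
    by_contra hcon
    push_neg at hcon
    obtain ⟨ha, hb⟩ := hcon
    -- first, the side condition holds for `a * y`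
    have hside : ∀ t ∉ p, t * (a * y) ∉ J := by
      intro t ht htay
      -- otherwise `J : t*y` strictly contains our maximal element and satisfies the condition
      have hcond : ∀ s ∉ p, s * (t * y) ∉ J := fun s hs hsty => by
        have hst : s * t ∉ p := fun h => (hp.mem_or_mem h).elim hs ht
        exact hy (s * t) hst (by rwa [mul_assoc])
      have hmono : J.colon (Ideal.span {y}) ≤ J.colon (Ideal.span {t * y}) := by
        intro x hx
        rw [Ideal.mem_colon_span_singleton] at hx ⊢
        rw [show x * (t * y) = t * (x * y) by ring]
        exact Ideal.mul_mem_left J t hx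
      have := hmax (J.colon (Ideal.span {t * y})) ⟨t * y, rfl, hcond⟩
      have heq : J.colon (Ideal.span {t * y}) = J.colon (Ideal.span {y}) :=
        le_antisymm (by
          by_contra hlt
          exact this (lt_of_le_of_ne hmono (fun h => hlt h.ge)) ) hmono
      apply ha
      rw [← heq, Ideal.mem_colon_span_singleton]
      rwa [show a * (t * y) = t * (a * y) by ring]
    have hmono : J.colon (Ideal.span {y}) ≤ J.colon (Ideal.span {a * y}) := by
      intro x hx
      rw [Ideal.mem_colon_span_singleton] at hx ⊢
      rw [show x * (a * y) = a * (x * y) by ring]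
      exact Ideal.mul_mem_left J a hx
    have := hmax (J.colon (Ideal.span {a * y})) ⟨a * y, rfl, hside⟩
    have heq : J.colon (Ideal.span {a * y}) = J.colon (Ideal.span {y}) :=
      le_antisymm (by
        by_contra hlt
        exact this (lt_of_le_of_ne hmono (fun h => hlt h.ge))) hmono
    apply hb
    rw [← heq, Ideal.mem_colon_span_singleton]
    rw [show b * (a * y) = a * b * y by ring]
    exact Ideal.mem_colon_span_singleton.mp hab

/-- Setup as in the paper: `R` a finitely generated `ℕ`-graded algebra over a
Noetherian ring `R₀`, `R` a domain, `I` a nonzero homogeneous ideal, `P ∈ Ass(R/I)`, `XP` the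
set `{P₁ ∈ Ass(R/I) | P ⊊ P₁}` and `Q` the product of its elements (`Q = R = ⊤` if `XP = ∅`).
If `g ∈ R` satisfies `g ∈ I : P` and `g ∉ I : (P + Q^∞)` (i.e. it is not the case that both
`g ∈ I : P` and `g ∈ I : Q^m` for some `m`), then `I : g = P`. -/
theorem colon_eq_of_mem_colon_notMem_colon_infty
    {R₀ R : Type*} [CommRing R₀] [IsNoetherianRing R₀]
    [CommRing R] [IsDomain R] [Algebra R₀ R] [Algebra.FiniteType R₀ R]
    (𝒜 : ℕ → Submodule R₀ R) [GradedAlgebra 𝒜]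
    (I : Ideal R) (hI0 : I ≠ ⊥) (hIhom : I.IsHomogeneous 𝒜)
    (P : Ideal R) (hP : P ∈ associatedPrimes R (R ⧸ I))
    (XP : Finset (Ideal R))
    (hXP : (↑XP : Set (Ideal R)) = {P₁ | P₁ ∈ associatedPrimes R (R ⧸ I) ∧ P < P₁})
    (Q : Ideal R) (hQ : Q = ∏ p ∈ XP, p)
    (g : R) (hgP : g ∈ I.colon P)
    (hg : ¬ (g ∈ I.colon P ∧ ∃ m : ℕ, g ∈ I.colon ((Q ^ m : Ideal R) : Set R))) :
    I.colon (Ideal.span {g}) = P := by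
  have hNoeth : IsNoetherianRing R := Algebra.FiniteType.isNoetherianRing R₀ R
  push_neg at hg
  have hg' : ∀ m : ℕ, g ∉ I.colon ((Q ^ m : Ideal R) : Set R) := hg hgP
  set J := I.colon (Ideal.span {g}) with hJdef
  -- `P ≤ J`
  have hPJ : P ≤ J := by
    intro x hx
    rw [hJdef, Ideal.mem_colon_span_singleton, mul_comm]
    exact Submodule.mem_colon.mp hgP x hx
  by_contra hne
  -- every prime over `J` contains `Q`
  have hQrad : Q ≤ J.radical := by
    rw [Ideal.radical_eq_sInf]
    refine le_sInf ?_
    rintro p ⟨hJp, hp⟩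
    obtain ⟨y, hq_prime, hqp⟩ := exists_prime_colon J p hp hJp
    set q := J.colon (Ideal.span {y}) with hq_def
    have hJq : J ≤ q := by
      intro x hx
      rw [hq_def, Ideal.mem_colon_span_singleton]
      exact Ideal.mul_mem_right y J hx
    have hq_eq : q = I.colon (Ideal.span {g * y}) := colon_colon_singleton I g y
    -- `q` is an associated prime of `R ⧸ I`
    have hq_ass : q ∈ associatedPrimes R (R ⧸ I) := by
      refine isAssociatedPrime_iff.mpr ⟨hq_prime, Ideal.Quotient.mk I (g * y), ?_⟩
      ext a
      rw [Submodule.mem_colon_singleton, Submodule.mem_bot, hq_eq, Ideal.mem_colon_span_singleton,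
        ← Ideal.Quotient.mk_eq_mk, ← Submodule.Quotient.mk_smul, Submodule.Quotient.mk_eq_zero,
        smul_eq_mul, mul_comm]
    -- `P < q`
    have hPq : P < q :=
      lt_of_le_of_ne (hPJ.trans hJq) fun h => hne (le_antisymm (h ▸ hJq) hPJ)
    have hqXP : q ∈ XP := by
      rw [← Finset.mem_coe, hXP]
      exact ⟨hq_ass, hPq⟩
    calc Q = ∏ p' ∈ XP, p' := hQ
      _ ≤ XP.inf id := Ideal.prod_le_inf
      _ ≤ q := Finset.inf_le hqXP
      _ ≤ p := hqp
  obtain ⟨m, hm⟩ :=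
    Ideal.exists_pow_le_of_le_radical_of_fg hQrad (IsNoetherian.noetherian Q)
  refine hg' m (Submodule.mem_colon.mpr fun x hx => ?_)
  have := Ideal.mem_colon_span_singleton.mp (hm hx)
  rwa [smul_eq_mul, mul_comm]
end

section
/- Let $R$ be a finitely generated $\mathbb{N}$-graded algebra over a Noetherian ring $R_0$ which is an integral domain, $I$ a nonzero homogeneous ideal of $R$, and $P \in \mathrm{Ass}(R/I)$. Let $g \in R$ with $g \notin I$ and suppose $P \subseteq I : g$ with $P \neq I : g$. Then every associated prime $P_1 \in \mathrm{Ass}(R/(I:g))$ satisfies $P \subsetneq P_1$ and $P_1 \in \mathrm{Ass}(R/I)$; consequently, if $Q$ denotes the product of the primes in $X_P = \{P_1 \in \mathrm{Ass}(R/I) : P \subsetneq P_1\}$, then $Q^m g \subseteq I$ for some $m \in \mathbb{N}$. -/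
private lemma aux_ass_colon_subset {R : Type*} [CommRing R] (I : Ideal R) (g : R) :
    associatedPrimes R (R ⧸ I.colon (Ideal.span {g})) ⊆ associatedPrimes R (R ⧸ I) := by
  set f : R →ₗ[R] R ⧸ I := (Submodule.mkQ I).comp (LinearMap.mulRight R g) with hf
  have hker : I.colon (Ideal.span {g}) = LinearMap.ker f := by
    ext x
    simp only [hf, LinearMap.mem_ker, LinearMap.comp_apply, LinearMap.mulRight_apply,
      Submodule.mkQ_apply, Ideal.mem_colon_span_singleton, Submodule.Quotient.mk_eq_zero]
  exact associatedPrimes.subset_of_injective (f := Submodule.liftQ _ f hker.le)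
    (by rw [← LinearMap.ker_eq_bot]; exact Submodule.ker_liftQ_eq_bot' _ f hker)

private lemma aux_colon_radical {R : Type*} [CommRing R] {J' : Ideal R} (h : J'.IsPrimary)
    {x : R} (hx : x ∉ J') :
    (J'.colon (Ideal.span {x})).radical = J'.radical ∧
      (J'.colon (Ideal.span {x})).IsPrimary := by
  have h' := Ideal.isPrimary_iff.mp h
  have hle : J' ≤ J'.colon (Ideal.span {x}) := fun a ha =>
    Ideal.mem_colon_span_singleton.mpr (Ideal.mul_mem_right x _ ha)
  have hle2 : J'.colon (Ideal.span {x}) ≤ J'.radical := by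
    intro a ha
    rw [Ideal.mem_colon_span_singleton] at ha
    rcases h'.2 (show x * a ∈ J' from mul_comm a x ▸ ha) with hx' | h2
    · exact absurd hx' hx
    · exact h2
  have hrad : (J'.colon (Ideal.span {x})).radical = J'.radical := by
    refine le_antisymm ?_ (Ideal.radical_mono hle)
    have := Ideal.radical_mono hle2
    rwa [Ideal.radical_idem] at this
  refine ⟨hrad, Ideal.isPrimary_iff.mpr ⟨?_, ?_⟩⟩
  · intro htop
    have h1 : (1 : R) ∈ J'.colon (Ideal.span {x}) := htop ▸ Submodule.mem_top
    rw [Ideal.mem_colon_span_singleton, one_mul] at h1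
    exact hx h1
  · intro a b hab
    rw [Ideal.mem_colon_span_singleton] at hab
    rcases h'.2 (show (a * x) * b ∈ J' from by rwa [mul_right_comm] at hab) with h1 | h2
    · exact Or.inl (Ideal.mem_colon_span_singleton.mpr h1)
    · exact Or.inr (hrad ▸ h2)

private lemma aux_radical_finset_inf {R : Type*} [CommRing R] (s : Finset (Ideal R)) :
    (s.inf id).radical = s.inf Ideal.radical := by
  classical
  induction s using Finset.induction_on with
  | empty => simpa using Ideal.radical_top R
  | insert a s h ih => rw [Finset.inf_insert, Finset.inf_insert, Ideal.radical_inf, ih, id]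

/-- Setup as in the paper: `R` a finitely generated `ℕ`-graded algebra over a
Noetherian ring `R₀`, `R` a domain, `I` a nonzero homogeneous ideal, `P ∈ Ass(R/I)`.
Let `g ∈ R` with `g ∉ I`, `P ⊆ I : g` and `P ≠ I : g`. Then every associated prime
`P₁ ∈ Ass(R/(I : g))` satisfies `P ⊊ P₁` and `P₁ ∈ Ass(R/I)`; consequently, if `Q` is the
product of the primes in `XP = {P₁ ∈ Ass(R/I) | P ⊊ P₁}`, then `Q^m g ⊆ I`
(i.e. `g ∈ I : Q^m`) for some `m ∈ ℕ`. -/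
theorem ass_colon_strictly_larger_and_pow_mul_subset
    {R₀ R : Type*} [CommRing R₀] [IsNoetherianRing R₀]
    [CommRing R] [IsDomain R] [Algebra R₀ R] [Algebra.FiniteType R₀ R]
    (𝒜 : ℕ → Submodule R₀ R) [GradedAlgebra 𝒜]
    (I : Ideal R) (hI0 : I ≠ ⊥) (hIhom : I.IsHomogeneous 𝒜)
    (P : Ideal R) (hP : P ∈ associatedPrimes R (R ⧸ I))
    (g : R) (hgI : g ∉ I)
    (hle : P ≤ I.colon (Ideal.span {g})) (hne : P ≠ I.colon (Ideal.span {g}))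
    (XP : Finset (Ideal R))
    (hXP : (↑XP : Set (Ideal R)) = {P₁ | P₁ ∈ associatedPrimes R (R ⧸ I) ∧ P < P₁})
    (Q : Ideal R) (hQ : Q = ∏ p ∈ XP, p) :
    (∀ P₁ ∈ associatedPrimes R (R ⧸ I.colon (Ideal.span {g})),
        P < P₁ ∧ P₁ ∈ associatedPrimes R (R ⧸ I)) ∧
      ∃ m : ℕ, g ∈ I.colon ((Q ^ m : Ideal R) : Set R) := by
  classical
  have hNoeth : IsNoetherianRing R := Algebra.FiniteType.isNoetherianRing R₀ R
  set J := I.colon (Ideal.span {g}) with hJdef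
  have hsub : associatedPrimes R (R ⧸ J) ⊆ associatedPrimes R (R ⧸ I) :=
    aux_ass_colon_subset I g
  have hJle : ∀ P₁ ∈ associatedPrimes R (R ⧸ J), J ≤ P₁ := by
    intro P₁ hP₁
    have := (hP₁ : IsAssociatedPrime P₁ (R ⧸ J)).annihilator_le
    rwa [Submodule.annihilator_top, Ideal.annihilator_quotient] at this
  have hPJ : P < J := lt_of_le_of_ne hle hne
  have part1 : ∀ P₁ ∈ associatedPrimes R (R ⧸ J),
      P < P₁ ∧ P₁ ∈ associatedPrimes R (R ⧸ I) :=
    fun P₁ hP₁ => ⟨lt_of_lt_of_le hPJ (hJle P₁ hP₁), hsub hP₁⟩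
  refine ⟨part1, ?_⟩
  -- J ≠ ⊤
  have hJne : J ≠ ⊤ := by
    intro h
    have h1 : (1 : R) ∈ J := h ▸ Submodule.mem_top
    rw [hJdef, Ideal.mem_colon_span_singleton, one_mul] at h1
    exact hgI h1
  -- Lasker decomposition of J
  obtain ⟨t, htinf, htprim, _, htmin⟩ : ∃ t : Finset (Ideal R), Submodule.IsMinimalPrimaryDecomposition J t :=
    Ideal.IsLasker.minimal (Submodule.isLasker R R) J
  -- every radical of a component is an associated prime of R ⧸ J
  have hcomp : ∀ J' ∈ t, J'.radical ∈ associatedPrimes R (R ⧸ J) := by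
    intro J' hJ'
    obtain ⟨x, hxK, hxJ'⟩ := SetLike.not_le_iff_exists.mp (htmin hJ')
    -- J : x = J' : x
    have hcolon : J.colon (Ideal.span {x}) = J'.colon (Ideal.span {x}) := by
      apply le_antisymm
      · intro a ha
        rw [Ideal.mem_colon_span_singleton] at ha ⊢
        have : J ≤ J' := htinf ▸ (Finset.inf_le hJ' : t.inf id ≤ id J')
        exact this ha
      · intro a ha
        rw [Ideal.mem_colon_span_singleton] at ha ⊢
        rw [← htinf]
        rw [Submodule.mem_finsetInf]
        intro K hK
        by_cases hKJ' : K = J'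
        · exact hKJ' ▸ ha
        · have hK' : K ∈ t.erase J' := Finset.mem_erase.mpr ⟨hKJ', hK⟩
          have hxK' : x ∈ K := (Finset.inf_le hK' : (t.erase J').inf id ≤ id K) hxK
          exact Ideal.mul_mem_left K a hxK'
    obtain ⟨hrad, hprim⟩ := aux_colon_radical (htprim hJ') hxJ'
    have hprimJ : (J.colon (Ideal.span {x})).IsPrimary := hcolon ▸ hprim
    have hsingle := associatedPrimes.eq_singleton_of_isPrimary hprimJ
    have hmem : J'.radical ∈ associatedPrimes R (R ⧸ J.colon (Ideal.span {x})) := by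
      rw [hsingle, Set.mem_singleton_iff, hcolon, hrad]
    exact aux_ass_colon_subset J x hmem
  -- Q ≤ radical J
  have hQrad : Q ≤ J.radical := by
    rw [← htinf, aux_radical_finset_inf]
    refine Finset.le_inf fun J' hJ' => ?_
    have hmem := hcomp J' hJ'
    have hXPmem : J'.radical ∈ XP := by
      have := (part1 J'.radical hmem)
      rw [← Finset.mem_coe, hXP]
      exact ⟨this.2, this.1⟩
    calc Q = ∏ p ∈ XP, p := hQ
      _ ≤ XP.inf id := Ideal.prod_le_inf
      _ ≤ J'.radical := Finset.inf_le hXPmem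
  obtain ⟨m, hm⟩ := Ideal.exists_pow_le_of_le_radical_of_fg hQrad (IsNoetherian.noetherian Q)
  refine ⟨m, Submodule.mem_colon.mpr fun q hq => ?_⟩
  have hqJ : q ∈ J := hm hq
  rw [hJdef, Ideal.mem_colon_span_singleton] at hqJ
  rw [smul_eq_mul, mul_comm]
  exact hqJ
end

section
/- Let $R$ be a finitely generated $\mathbb{N}$-graded algebra over a Noetherian ring $R_0$ which is an integral domain, $I$ a nonzero homogeneous ideal of $R$, and $P \in \mathcal{A}(I)$. Let $Q$ be the product of the ideals in $\{P_1 \in \mathcal{A}(I) : P \subsetneq P_1\}$ (with $Q = R$ if this set is empty). Then for all sufficiently large $n$, $v_P(I^{n+1})$ equals the smallest $w \in \mathbb{N}$ such that the degree-$w$ graded component of $(I^{n+1} : P)/(I^{n+1} : (P + Q^\infty))$ is nonzero; moreover, for all sufficiently large $n$ one has $I^{n+1} : P \subseteq I^n$. -/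
private lemma ann_mk_eq_colon {R : Type*} [CommRing R] (K : Ideal R) (e : R) :
    (Submodule.span R {(Submodule.Quotient.mk e : R ⧸ K)}).annihilator
      = K.colon (Ideal.span {e}) := by
  ext r
  rw [Submodule.mem_annihilator_span_singleton, Ideal.mem_colon_span_singleton,
    ← Submodule.Quotient.mk_smul, Submodule.Quotient.mk_eq_zero, smul_eq_mul]

/-- Ratliff–Rush type statement: in a Noetherian domain, `I^{n+1} : I ⊆ I^n` for `n ≫ 0`. -/
private lemma colon_pow_succ_le {R : Type*} [CommRing R] [IsDomain R] [IsNoetherianRing R]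
    (I : Ideal R) (hI0 : I ≠ ⊥) :
    ∃ n₀ : ℕ, ∀ n, n₀ ≤ n → (I ^ (n + 1)).colon I ≤ I ^ n := by
  obtain ⟨x, hxI, hx0⟩ := I.ne_bot_iff.mp hI0
  set φ : R →ₗ[R] R := LinearMap.lsmul R R x with hφdef
  have hφ : Function.Injective φ := by
    intro a b hab
    simp only [hφdef, LinearMap.lsmul_apply, smul_eq_mul] at hab
    exact mul_left_cancel₀ hx0 hab
  let F : I.Filtration R :=
    { N := fun n => Submodule.map φ ((I ^ (n + 1)).colon I)
      mono := fun n => Submodule.map_mono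
        (Submodule.colon_mono (Ideal.pow_le_pow_right (by omega)) le_rfl)
      smul_le := fun n => by
        rw [← Submodule.map_smul'']
        refine Submodule.map_mono (Submodule.smul_le.mpr fun a ha m hm => ?_)
        refine Submodule.mem_colon.mpr fun b hb => ?_
        have h1 : m * b ∈ I ^ (n + 1) := by
          simpa [smul_eq_mul] using Submodule.mem_colon.mp hm b hb
        have h2 : (m * b) * a ∈ I ^ (n + 1) * I := Ideal.mul_mem_mul h1 ha
        have h3 : (a • m) • b = (m * b) * a := by simp [smul_eq_mul]; ring
        rw [h3, pow_succ]
        exact h2 }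
  have hFle : F ≤ I.stableFiltration ⊤ := by
    have hsup : F ⊔ I.stableFiltration ⊤ = I.stableFiltration ⊤ := by
      refine Ideal.Filtration.ext ?_
      funext n
      refine sup_eq_right.mpr ?_
      rintro _ ⟨m, hm, rfl⟩
      have h1 : m * x ∈ I ^ (n + 1) := by
        simpa [smul_eq_mul] using Submodule.mem_colon.mp hm x hxI
      have h2 : φ m ∈ I ^ n := by
        have : m * x ∈ I ^ n := Ideal.pow_le_pow_right (by omega) h1
        simpa [hφdef, smul_eq_mul, mul_comm] using this
      have h4 : φ m • (1 : R) ∈ I ^ n • (⊤ : Submodule R R) :=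
        Submodule.smul_mem_smul h2 (Submodule.mem_top : (1 : R) ∈ ⊤)
      simpa using h4
    exact le_sup_left.trans_eq hsup
  have hFstable : F.Stable := (I.stableFiltration_stable ⊤).of_le hFle
  obtain ⟨k, hk⟩ := hFstable
  refine ⟨k + 1, fun n hn => ?_⟩
  obtain ⟨j, rfl⟩ : ∃ j, n = j + 1 := ⟨n - 1, by omega⟩
  have hkey : I • F.N j = F.N (j + 1) := hk j (by omega)
  have hmap : Submodule.map φ (I • (I ^ (j + 1)).colon I)
      = Submodule.map φ ((I ^ (j + 1 + 1)).colon I) := by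
    rw [Submodule.map_smul'']
    exact hkey
  have heq : I • (I ^ (j + 1)).colon I = (I ^ (j + 1 + 1)).colon I :=
    Submodule.map_injective_of_injective hφ hmap
  rw [← heq]
  refine Submodule.smul_le.mpr fun a ha m hm => ?_
  have h1 : m * a ∈ I ^ (j + 1) := by
    simpa [smul_eq_mul] using Submodule.mem_colon.mp hm a ha
  simpa [smul_eq_mul, mul_comm] using h1

/-- `R` a finitely generated `ℕ`-graded algebra over a Noetherian ring `R₀`,
`R` a domain, `I` a nonzero homogeneous ideal, `AI = 𝒜(I)` the stable set of asymptotic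
associated primes of `I` (so `Ass(R/I^n) = AI` for all `n ≥ N`), `P ∈ AI`, and `Q` the product
of the ideals in `{P₁ ∈ AI | P ⊊ P₁}` (with `Q = R = ⊤` if this set is empty). Then for all
sufficiently large `n`, `v_P(I^{n+1})` equals the smallest `w` such that the degree-`w`
component of `(I^{n+1} : P)/(I^{n+1} : (P + Q^∞))` is nonzero — i.e. the smallest `w` such
that some homogeneous `g` of degree `w` lies in `I^{n+1} : P` but not in
`I^{n+1} : (P + Q^∞)` — and moreover `I^{n+1} : P ⊆ I^n`. -/
theorem v_invariant_pow_eq_sInf_and_colon_le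
    {R₀ R : Type*} [CommRing R₀] [IsNoetherianRing R₀]
    [CommRing R] [IsDomain R] [Algebra R₀ R] [Algebra.FiniteType R₀ R]
    (𝒜 : ℕ → Submodule R₀ R) [GradedAlgebra 𝒜]
    (I : Ideal R) (hI0 : I ≠ ⊥) (hIhom : I.IsHomogeneous 𝒜)
    (AI : Set (Ideal R)) (N : ℕ)
    (hAI : ∀ n, N ≤ n → associatedPrimes R (R ⧸ I ^ n) = AI)
    (P : Ideal R) (hP : P ∈ AI)
    (XP : Finset (Ideal R))
    (hXP : (↑XP : Set (Ideal R)) = {P₁ | P₁ ∈ AI ∧ P < P₁})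
    (Q : Ideal R) (hQ : Q = ∏ p ∈ XP, p) :
    ∃ n₀ : ℕ, ∀ n, n₀ ≤ n →
      (sInf {u : ℕ | ∃ f ∈ 𝒜 u, (I ^ (n + 1)).colon (Ideal.span {f}) = P}
          = sInf {w : ℕ | ∃ g ∈ 𝒜 w, g ∈ (I ^ (n + 1)).colon P ∧
              ¬ (g ∈ (I ^ (n + 1)).colon P ∧ ∃ m : ℕ, g ∈ (I ^ (n + 1)).colon (Q ^ m : Ideal R))})
        ∧ (I ^ (n + 1)).colon P ≤ I ^ n := by
  classical
  haveI : IsNoetherianRing R := Algebra.FiniteType.isNoetherianRing R₀ R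
  obtain ⟨k, hk⟩ := colon_pow_succ_le I hI0
  refine ⟨max N (k + 1), fun n hn => ?_⟩
  have hAss : associatedPrimes R (R ⧸ I ^ (n + 1)) = AI := hAI (n + 1) (by omega)
  have hPassoc : IsAssociatedPrime P (R ⧸ I ^ (n + 1)) := by
    rw [← hAss] at hP; exact hP
  have hPprime : P.IsPrime := hPassoc.isPrime
  haveI := hPprime
  have hIP : I ≤ P := by
    obtain ⟨-, x, hx⟩ := isAssociatedPrime_iff.mp hPassoc
    obtain ⟨y, rfl⟩ := Submodule.Quotient.mk_surjective _ x
    intro a ha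
    have hmem : a ^ (n + 1) ∈ P := by
      rw [hx, Submodule.mem_colon_singleton, Submodule.mem_bot, ← Submodule.Quotient.mk_smul,
        Submodule.Quotient.mk_eq_zero, smul_eq_mul]
      exact Ideal.mul_mem_right y _ (Ideal.pow_mem_pow ha (n + 1))
    exact hPprime.mem_of_pow_mem _ hmem
  constructor
  · congr 1
    ext w
    simp only [Set.mem_setOf_eq]
    constructor
    · rintro ⟨f, hf, hfP⟩
      refine ⟨f, hf, ?_, ?_⟩
      · refine Submodule.mem_colon.mpr fun p hp => ?_
        rw [← hfP] at hp
        rw [smul_eq_mul, mul_comm]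
        exact Ideal.mem_colon_span_singleton.mp hp
      · rintro ⟨-, m, hm⟩
        have hQmP : Q ^ m ≤ P := by
          intro q hq
          rw [← hfP]
          refine Ideal.mem_colon_span_singleton.mpr ?_
          have := Submodule.mem_colon.mp hm q hq
          rwa [smul_eq_mul, mul_comm] at this
        rcases Nat.eq_zero_or_pos m with rfl | hm0
        · rw [pow_zero, Ideal.one_eq_top] at hQmP
          exact hPprime.ne_top (top_le_iff.mp hQmP)
        · have hQP : Q ≤ P := (Ideal.IsPrime.pow_le_iff (by omega)).mp hQmP
          rw [hQ] at hQP
          obtain ⟨p, hpXP, hpP⟩ := hPprime.prod_le.mp hQP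
          have hmem : p ∈ (↑XP : Set (Ideal R)) := hpXP
          rw [hXP] at hmem
          exact hmem.2.not_ge hpP
    · rintro ⟨g, hg, hgP, hgnot⟩
      have hgQ : ∀ m : ℕ, g ∉ (I ^ (n + 1)).colon (Q ^ m : Ideal R) := fun m hm => hgnot ⟨hgP, m, hm⟩
      set I' := I ^ (n + 1) with hI'
      set J := I'.colon (Ideal.span {g}) with hJdef
      have hPJ : P ≤ J := by
        intro p hp
        refine Ideal.mem_colon_span_singleton.mpr ?_
        have := Submodule.mem_colon.mp hgP p hp
        rwa [smul_eq_mul, mul_comm] at this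
      let c : ℕ →o Ideal R :=
        ⟨fun m => J.colon (Q ^ m : Ideal R), fun m m' hmm' =>
          Submodule.colon_mono le_rfl (Ideal.pow_le_pow_right hmm')⟩
      obtain ⟨m₀, hm₀⟩ := monotone_stabilizes_iff_noetherian.mpr inferInstance c
      set J' := J.colon (Q ^ m₀ : Ideal R) with hJ'def
      have hJJ' : J ≤ J' := by
        intro y hy
        refine Submodule.mem_colon.mpr fun q hq => ?_
        rw [smul_eq_mul]
        exact Ideal.mul_mem_right q _ hy
      have hJ'ne : J' ≠ ⊤ := by
        intro htop
        refine hgQ m₀ (Submodule.mem_colon.mpr fun q hq => ?_)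
        have h1 : (1 : R) ∈ J' := htop ▸ Submodule.mem_top
        have h2 := Submodule.mem_colon.mp h1 q hq
        rw [smul_eq_mul, one_mul] at h2
        rw [smul_eq_mul, mul_comm]
        exact Ideal.mem_colon_span_singleton.mp h2
      haveI : Nontrivial (R ⧸ J') :=
        Submodule.Quotient.nontrivial_iff.mpr hJ'ne
      obtain ⟨q', hq'⟩ := associatedPrimes.nonempty R (R ⧸ J')
      have hq'prime : q'.IsPrime := hq'.isPrime
      haveI := hq'prime
      obtain ⟨-, x, hx⟩ := isAssociatedPrime_iff.mp hq'
      obtain ⟨h, rfl⟩ := Submodule.Quotient.mk_surjective _ x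
      have hq'eq : q' = J'.colon (Ideal.span {h}) := by
        ext r
        rw [hx, Submodule.mem_colon_singleton, Submodule.mem_bot, ← ann_mk_eq_colon,
          Submodule.mem_annihilator_span_singleton]
      have hJ'q' : J' ≤ q' := by
        rw [hq'eq]
        intro y hy
        exact Ideal.mem_colon_span_singleton.mpr (Ideal.mul_mem_right h _ hy)
      have hPq' : P ≤ q' := hPJ.trans (hJJ'.trans hJ'q')
      have hQq' : ¬ Q ≤ q' := by
        intro hle
        have hmul : Q ^ m₀ * Q ≤ J.colon (Ideal.span {h}) := by
          refine Ideal.mul_le.mpr fun b hb a ha => ?_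
          have hah : a * h ∈ J' := by
            have := hle ha
            rw [hq'eq] at this
            exact Ideal.mem_colon_span_singleton.mp this
          have hbah : (a * h) * b ∈ J := by
            have := Submodule.mem_colon.mp hah b hb
            rwa [smul_eq_mul] at this
          refine Ideal.mem_colon_span_singleton.mpr ?_
          have hre : (b * a) * h = (a * h) * b := by ring
          rwa [hre]
        have hhJ' : h ∈ J.colon (Q ^ (m₀ + 1) : Ideal R) := by
          refine Submodule.mem_colon.mpr fun q hq => ?_
          have hq2 : q ∈ J.colon (Ideal.span {h}) := by
            apply hmul
            rwa [← pow_succ]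
          rw [smul_eq_mul, mul_comm]
          exact Ideal.mem_colon_span_singleton.mp hq2
        have hstab : J.colon (Q ^ (m₀ + 1) : Ideal R) = J' := (hm₀ (m₀ + 1) (Nat.le_succ _)).symm
        rw [hstab] at hhJ'
        have h1 : (1 : R) ∈ q' := by
          rw [hq'eq]
          refine Ideal.mem_colon_span_singleton.mpr ?_
          rwa [one_mul]
        exact hq'prime.ne_top ((Ideal.eq_top_iff_one _).mpr h1)
      obtain ⟨S, hS⟩ : (Q ^ m₀).FG := IsNoetherian.noetherian _
      have hq'char : ∀ r : R, r ∈ q' ↔ ∀ q ∈ S, r * (g * h * q) ∈ I' := by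
        intro r
        rw [hq'eq, Ideal.mem_colon_span_singleton]
        constructor
        · intro hrh q hqS
          have hqQ : q ∈ Q ^ m₀ := by
            rw [← hS]; exact Ideal.subset_span hqS
          have h1 : (r * h) * q ∈ J := by
            have := Submodule.mem_colon.mp hrh q hqQ
            rwa [smul_eq_mul] at this
          have h2 : ((r * h) * q) * g ∈ I' := Ideal.mem_colon_span_singleton.mp h1
          have hre : r * (g * h * q) = ((r * h) * q) * g := by ring
          rwa [hre]
        · intro hall
          refine Submodule.mem_colon.mpr fun q hq => ?_
          rw [smul_eq_mul]
          have hle : Q ^ m₀ ≤ I'.colon (Ideal.span {r * h * g}) := by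
            rw [← hS, Ideal.span_le]
            intro q₀ hq₀
            refine Ideal.mem_colon_span_singleton.mpr ?_
            have := hall q₀ hq₀
            have hre : q₀ * (r * h * g) = r * (g * h * q₀) := by ring
            rwa [hre]
          have h1 : q * (r * h * g) ∈ I' := Ideal.mem_colon_span_singleton.mp (hle hq)
          refine Ideal.mem_colon_span_singleton.mpr ?_
          have hre : ((r * h) * q) * g = q * (r * h * g) := by ring
          rwa [hre]
      have hex : ∃ q ∈ S, q' = I'.colon (Ideal.span {g * h * q}) := by
        by_contra hno
        push_neg at hno
        have hall : ∀ q ∈ S, ∃ r, r ∈ I'.colon (Ideal.span {g * h * q}) ∧ r ∉ q' := by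
          intro q hqS
          have hle : q' ≤ I'.colon (Ideal.span {g * h * q}) := fun r hr =>
            Ideal.mem_colon_span_singleton.mpr ((hq'char r).mp hr q hqS)
          by_contra hc
          push_neg at hc
          exact hno q hqS (le_antisymm hle fun r hr => hc r hr)
        choose! r hr1 hr2 using hall
        have hprod : (∏ q ∈ S, r q) ∈ q' := by
          rw [hq'char]
          intro q hqS
          rw [← Finset.mul_prod_erase S r hqS]
          have h1 : (r q) * (g * h * q) ∈ I' := Ideal.mem_colon_span_singleton.mp (hr1 q hqS)
          have hre : (r q * ∏ q₁ ∈ S.erase q, r q₁) * (g * h * q)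
              = ((r q) * (g * h * q)) * ∏ q₁ ∈ S.erase q, r q₁ := by ring
          rw [hre]
          exact Ideal.mul_mem_right _ _ h1
        obtain ⟨q, hqS, hqq'⟩ := Ideal.IsPrime.prod_mem_iff.mp hprod
        exact hr2 q hqS hqq'
      obtain ⟨q₀, hq₀S, hq₀⟩ := hex
      have hq'AI : q' ∈ AI := by
        rw [← hAss]
        refine isAssociatedPrime_iff.mpr ⟨hq'prime, Submodule.Quotient.mk (g * h * q₀), ?_⟩
        ext r
        rw [Submodule.mem_colon_singleton, Submodule.mem_bot, hq₀, ← ann_mk_eq_colon,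
          Submodule.mem_annihilator_span_singleton]
      have hq'P : q' = P := by
        rcases eq_or_lt_of_le hPq' with hcase | hcase
        · exact hcase.symm
        · exfalso
          apply hQq'
          have hq'XP : q' ∈ XP := by
            have : q' ∈ (↑XP : Set (Ideal R)) := by
              rw [hXP]; exact ⟨hq'AI, hcase⟩
            exact this
          rw [hQ, ← Finset.mul_prod_erase XP _ hq'XP]
          exact Ideal.mul_le_left
      have hJP : J = P := le_antisymm (hJJ'.trans (hJ'q'.trans (le_of_eq hq'P))) hPJ
      exact ⟨g, hg, hJP⟩
  · have h1 : (I ^ (n + 1)).colon P ≤ (I ^ (n + 1)).colon I :=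
      Submodule.colon_mono le_rfl hIP
    exact h1.trans (hk n (by omega))
end

section
/- Let $R$ be a finitely generated $\mathbb{N}$-graded algebra over a Noetherian ring $R_0$, and let $A = R[y_1, \dots, y_d]$ be a polynomial extension of $R$, bigraded by $\deg y_i = (d_i, 1)$ for $i = 1, \dots, d$ (with $d_i \in \mathbb{N}$) and $\deg x = (s, 0)$ for every homogeneous $x \in R_s$. Let $U$ be a finitely generated bigraded $A$-module such that for all sufficiently large $n$ there exists $w$ with $U_{(w,n)} \neq 0$. Then the function $n \mapsto \min\{w \in \mathbb{N} : U_{(w,n)} \neq 0\}$ is eventually linear in $n$ with leading coefficient in the set $\{d_1, \dots, d_d\}$; that is, there exist $n_0 \in \mathbb{N}$, $a \in \{d_1,\dots,d_d\}$ and $b \in \mathbb{Z}$ such that $\min\{w : U_{(w,n)} \neq 0\} = an + b$ for all $n \geq n_0$. -/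
open MvPolynomial
open scoped DirectSum
set_option linter.unusedSectionVars false
set_option maxHeartbeats 1000000

section Aux

variable {R₀ R : Type*} [CommRing R₀]
    [CommRing R] [Algebra R₀ R]
    {k : ℕ}
    {U : Type*} [AddCommGroup U] [Module R₀ U]
    [Module (MvPolynomial (Fin k) R) U]
    [IsScalarTower R₀ (MvPolynomial (Fin k) R) U]

variable (𝒜 : ℕ → Submodule R₀ R) (d : Fin k → ℕ)
variable (𝒰 : ℕ × ℕ → Submodule R₀ U)

/-- weighted degree of a monomial -/
def MDwdeg (m : Fin k →₀ ℕ) : ℕ := m.sum fun i e => e * d i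

/-- total degree of a monomial -/
def MDndeg (m : Fin k →₀ ℕ) : ℕ := m.sum fun _ e => e

/-- Projection onto the `δ` component. -/
noncomputable def MDproj (hdec : DirectSum.IsInternal 𝒰) (δ : ℕ × ℕ) : U →+ U :=
  ((𝒰 δ).subtype ∘ₗ (DirectSum.component R₀ (ℕ × ℕ) (fun γ => (𝒰 γ : Submodule R₀ U)) δ) ∘ₗ
    ((LinearEquiv.ofBijective (DirectSum.coeLinearMap 𝒰) hdec).symm :
      U →ₗ[R₀] ⨁ γ, 𝒰 γ)).toAddMonoidHom

theorem MDproj_mem_same (hdec : DirectSum.IsInternal 𝒰) {δ : ℕ × ℕ} {u : U}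
    (hu : u ∈ 𝒰 δ) : MDproj 𝒰 hdec δ u = u := by
  simp only [MDproj, LinearMap.toAddMonoidHom_coe, LinearMap.coe_comp, Function.comp_apply,
    LinearEquiv.coe_coe]
  rw [← DirectSum.apply_eq_component]
  rw [hdec.ofBijective_coeLinearMap_of_mem hu]
  rfl

theorem MDproj_mem_ne (hdec : DirectSum.IsInternal 𝒰) {γ δ : ℕ × ℕ} (hne : γ ≠ δ) {u : U}
    (hu : u ∈ 𝒰 γ) : MDproj 𝒰 hdec δ u = 0 := by
  simp only [MDproj, LinearMap.toAddMonoidHom_coe, LinearMap.coe_comp, Function.comp_apply,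
    LinearEquiv.coe_coe]
  rw [← DirectSum.apply_eq_component]
  rw [hdec.ofBijective_coeLinearMap_of_mem_ne hne hu]
  rfl

theorem MD_mem_congr {p q : ℕ × ℕ} {u : U} (h : u ∈ 𝒰 p) (h1 : p.1 = q.1)
    (h2 : p.2 = q.2) : u ∈ 𝒰 q := by
  obtain ⟨a, b⟩ := p; obtain ⟨c, e⟩ := q
  dsimp at h1 h2; subst h1; subst h2; exact h

section Action

variable (hX : ∀ (i : Fin k) (w n : ℕ) (u : U), u ∈ 𝒰 (w, n) →
      (MvPolynomial.X i : MvPolynomial (Fin k) R) • u ∈ 𝒰 (w + d i, n + 1))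

include hX in
theorem MD_X_pow_smul_mem (i : Fin k) :
    ∀ (e : ℕ) (w n : ℕ) (u : U), u ∈ 𝒰 (w, n) →
      ((X i : MvPolynomial (Fin k) R) ^ e) • u ∈ 𝒰 (w + e * d i, n + e) := by
  intro e
  induction e with
  | zero => intro w n u hu; simpa using hu
  | succ e ih =>
    intro w n u hu
    have h1 := hX i _ _ _ (ih w n u hu)
    rw [← mul_smul, ← pow_succ'] at h1
    exact MD_mem_congr 𝒰 h1 (by ring) (by omega)

variable (hC : ∀ (s : ℕ) (x : R), x ∈ 𝒜 s → ∀ (w n : ℕ) (u : U), u ∈ 𝒰 (w, n) →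
      (MvPolynomial.C x : MvPolynomial (Fin k) R) • u ∈ 𝒰 (w + s, n))

include hX hC in
theorem MD_monomial_smul_mem (m : Fin k →₀ ℕ) (s : ℕ) (x : R) (hx : x ∈ 𝒜 s)
    (w n : ℕ) (u : U) (hu : u ∈ 𝒰 (w, n)) :
    (monomial m x : MvPolynomial (Fin k) R) • u ∈
      𝒰 (w + s + MDwdeg d m, n + MDndeg m) := by
  induction m using Finsupp.induction with
  | zero =>
    rw [monomial_zero']
    have := hC s x hx w n u hu
    exact MD_mem_congr 𝒰 this (by simp [MDwdeg]) (by simp [MDndeg])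
  | single_add i b f hif hb ihf =>
    rw [monomial_single_add, mul_smul]
    have h1 := MD_X_pow_smul_mem d 𝒰 hX i b _ _ _ ihf
    have e1 : MDwdeg d (Finsupp.single i b + f) = b * d i + MDwdeg d f := by
      rw [MDwdeg, MDwdeg,
        Finsupp.sum_add_index' (fun a => zero_mul (d a)) (fun a b₁ b₂ => add_mul b₁ b₂ (d a)),
        Finsupp.sum_single_index (zero_mul (d i))]
    have e2 : MDndeg (Finsupp.single i b + f) = b + MDndeg f := by
      rw [MDndeg, MDndeg,
        Finsupp.sum_add_index' (fun _ => rfl) (fun _ b₁ b₂ => rfl),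
        Finsupp.sum_single_index rfl]
    refine MD_mem_congr 𝒰 h1 ?_ ?_
    · simp only [e1]; omega
    · simp only [e2]; omega

include hX hC in
/-- Decomposition of an arbitrary scalar action into elementary monomial pieces. -/
theorem MD_smul_mem_of_elementary [GradedAlgebra 𝒜] (u₀ : U) (W : AddSubgroup U)
    (h : ∀ (m : Fin k →₀ ℕ) (s : ℕ) (x : R), x ∈ 𝒜 s →
      ((monomial m x : MvPolynomial (Fin k) R) • u₀) ∈ W)
    (a : MvPolynomial (Fin k) R) : a • u₀ ∈ W := by
  classical
  rw [← support_sum_monomial_coeff a, Finset.sum_smul]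
  refine AddSubgroup.sum_mem _ fun m hm => ?_
  have hc : a.coeff m = ∑ s ∈ (DirectSum.decompose 𝒜 (a.coeff m)).support,
      ((DirectSum.decompose 𝒜 (a.coeff m)) s : R) :=
    (DirectSum.sum_support_decompose 𝒜 _).symm
  rw [hc, map_sum, Finset.sum_smul]
  exact AddSubgroup.sum_mem _ fun s _ => h m s _ (SetLike.coe_mem _)

end Action

/-- If `X i • u₀` lies in an `A`-submodule `V` and `i` occurs in `m`, then
`monomial m x • u₀ ∈ V`. -/
theorem MD_monomial_smul_mem_of_X (V : Submodule (MvPolynomial (Fin k) R) U) (u₀ : U)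
    (i : Fin k) (hXi : (X i : MvPolynomial (Fin k) R) • u₀ ∈ V)
    (m : Fin k →₀ ℕ) (hi : m i ≠ 0) (x : R) :
    (monomial m x : MvPolynomial (Fin k) R) • u₀ ∈ V := by
  have h1 : Finsupp.single i 1 ≤ m := by
    rw [Finsupp.single_le_iff]; omega
  have h2 : (monomial m x : MvPolynomial (Fin k) R)
      = X i ^ 1 * monomial (m - Finsupp.single i 1) x := by
    rw [← monomial_single_add, add_tsub_cancel_of_le h1]
  rw [h2, pow_one, mul_comm, mul_smul]
  exact V.smul_mem _ hXi

/-- The annihilator of `u` modulo `V`. -/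
def MDann (V : Submodule (MvPolynomial (Fin k) R) U) (u : U) :
    Ideal (MvPolynomial (Fin k) R) where
  carrier := {a | a • u ∈ V}
  add_mem' := by
    intro a b ha hb
    simp only [Set.mem_setOf_eq] at *
    rw [add_smul]; exact V.add_mem ha hb
  zero_mem' := by simp only [Set.mem_setOf_eq, zero_smul]; exact V.zero_mem
  smul_mem' := by
    intro c a ha
    simp only [Set.mem_setOf_eq, smul_eq_mul] at *
    rw [mul_smul]; exact V.smul_mem c ha

theorem MDann_mem {V : Submodule (MvPolynomial (Fin k) R) U} {u : U}
    {a : MvPolynomial (Fin k) R} : a ∈ MDann V u ↔ a • u ∈ V := Iff.rfl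

section Cover

variable [GradedAlgebra 𝒜] [IsNoetherianRing R] [Module.Finite (MvPolynomial (Fin k) R) U]

/-- The support of `U/V` is covered by finitely many cones, each of whose minimal
ray is realized. -/
def MDGood (V : Submodule (MvPolynomial (Fin k) R) U) : Prop :=
  ∃ L : List (ℕ × ℕ × Option (Fin k)),
    (∀ w n : ℕ, (∃ u ∈ 𝒰 (w, n), u ∉ V) → ∃ c ∈ L,
      (∀ i : Fin k, c.2.2 = some i → c.2.1 ≤ n ∧ c.1 + d i * (n - c.2.1) ≤ w) ∧
      (c.2.2 = none → n = c.2.1)) ∧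
    (∀ c ∈ L, ∀ i : Fin k, c.2.2 = some i → ∀ n : ℕ, c.2.1 ≤ n →
      ∃ u ∈ 𝒰 (c.1 + d i * (n - c.2.1), n), u ∉ V)

variable (hX : ∀ (i : Fin k) (w n : ℕ) (u : U), u ∈ 𝒰 (w, n) →
      (MvPolynomial.X i : MvPolynomial (Fin k) R) • u ∈ 𝒰 (w + d i, n + 1))
variable (hC : ∀ (s : ℕ) (x : R), x ∈ 𝒜 s → ∀ (w n : ℕ) (u : U), u ∈ 𝒰 (w, n) →
      (MvPolynomial.C x : MvPolynomial (Fin k) R) • u ∈ 𝒰 (w + s, n))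

include hX hC in
theorem MD_cover (hdec : DirectSum.IsInternal 𝒰) :
    ∀ V : Submodule (MvPolynomial (Fin k) R) U,
      (∀ v ∈ V, ∀ δ : ℕ × ℕ, MDproj 𝒰 hdec δ v ∈ V) → MDGood d 𝒰 V := by
  classical
  have wf : WellFounded ((· > ·) : Submodule (MvPolynomial (Fin k) R) U → _) :=
    isNoetherian_iff.mp inferInstance
  intro V₀
  refine wf.induction
    (C := fun V => (∀ v ∈ V, ∀ δ : ℕ × ℕ, MDproj 𝒰 hdec δ v ∈ V) → MDGood d 𝒰 V) V₀ ?_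
  intro V IH hGr
  by_cases hall : ∀ (w n : ℕ), ∀ u ∈ 𝒰 (w, n), u ∈ V
  · refine ⟨[], ?_, ?_⟩
    · rintro w n ⟨u, hu, hu'⟩; exact absurd (hall w n u hu) hu'
    · intro c hc; simp at hc
  · push_neg at hall
    obtain ⟨w₁, n₁, u₁, hu₁, hu₁'⟩ := hall
    -- pick a homogeneous element with maximal annihilator
    set S : Set (Ideal (MvPolynomial (Fin k) R)) :=
      {I | ∃ (δ : ℕ × ℕ) (u : U), u ∈ 𝒰 δ ∧ u ∉ V ∧ I = MDann V u} with hS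
    have hSne : S.Nonempty := ⟨MDann V u₁, ⟨(w₁, n₁), u₁, hu₁, hu₁', rfl⟩⟩
    have wfI : WellFounded ((· > ·) : Ideal (MvPolynomial (Fin k) R) → _) :=
      isNoetherian_iff.mp inferInstance
    obtain ⟨P, hPS, hPmax⟩ := wfI.has_min S hSne
    obtain ⟨δ₀, u₀, hu₀, hu₀', hPeq⟩ := hPS
    obtain ⟨w₀, n₀⟩ := δ₀
    have hP : ∀ a : MvPolynomial (Fin k) R, a ∈ P ↔ a • u₀ ∈ V := fun a => by
      rw [hPeq]; exact Iff.rfl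
    have hmax : ∀ (δ : ℕ × ℕ) (u : U), u ∈ 𝒰 δ → u ∉ V →
        P ≤ MDann V u → MDann V u ≤ P := by
      intro δ u hu hu' hle
      by_contra hcon
      refine hPmax (MDann V u) ⟨δ, u, hu, hu', rfl⟩ (lt_of_le_of_ne hle ?_)
      intro h; exact hcon (le_of_eq h.symm)
    -- powers of a variable not killing u₀ never send it into V
    have hpow : ∀ (i : Fin k), (X i : MvPolynomial (Fin k) R) • u₀ ∉ V → ∀ j : ℕ,
        ((X i : MvPolynomial (Fin k) R) ^ j) • u₀ ∉ V := by
      intro i hXi j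
      induction j with
      | zero => simpa using hu₀'
      | succ j ihj =>
        intro hcon
        have hmem : ((X i : MvPolynomial (Fin k) R) ^ j) • u₀ ∈ 𝒰 (w₀ + j * d i, n₀ + j) :=
          MD_X_pow_smul_mem d 𝒰 hX i j w₀ n₀ u₀ hu₀
        have hle : P ≤ MDann V (((X i : MvPolynomial (Fin k) R) ^ j) • u₀) := by
          intro a ha
          rw [MDann_mem, ← mul_smul, mul_comm, mul_smul]
          exact V.smul_mem _ ((hP a).mp ha)
        have hXmem : (X i : MvPolynomial (Fin k) R) ∈
            MDann V (((X i : MvPolynomial (Fin k) R) ^ j) • u₀) := by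
          rw [MDann_mem, ← mul_smul, ← pow_succ']
          exact hcon
        exact hXi ((hP _).mp (hmax _ _ hmem ihj hle hXmem))
    -- the enlarged submodule
    set V' : Submodule (MvPolynomial (Fin k) R) U :=
      V ⊔ Submodule.span (MvPolynomial (Fin k) R) {u₀} with hV'def
    have hu₀V' : u₀ ∈ V' :=
      SetLike.le_def.mp le_sup_right (Submodule.mem_span_singleton_self u₀)
    have hVV' : V < V' := lt_of_le_of_ne le_sup_left
      (fun h => hu₀' (by rw [h]; exact hu₀V'))
    have hGr' : ∀ v ∈ V', ∀ δ : ℕ × ℕ, MDproj 𝒰 hdec δ v ∈ V' := by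
      intro v hv δ
      obtain ⟨x, hx, z, hz, rfl⟩ := Submodule.mem_sup.mp hv
      obtain ⟨a, rfl⟩ := Submodule.mem_span_singleton.mp hz
      rw [map_add]
      refine V'.add_mem (SetLike.le_def.mp le_sup_left (hGr x hx δ)) ?_
      have hmem := MD_smul_mem_of_elementary 𝒜 d 𝒰 hX hC u₀
        (AddSubgroup.comap (MDproj 𝒰 hdec δ) V'.toAddSubgroup) ?_ a
      · exact hmem
      · intro m s x' hx'
        have hγ := MD_monomial_smul_mem 𝒜 d 𝒰 hX hC m s x' hx' w₀ n₀ u₀ hu₀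
        rw [AddSubgroup.mem_comap]
        by_cases hcase : ((w₀ + s + MDwdeg d m : ℕ), (n₀ + MDndeg m : ℕ)) = δ
        · rw [MDproj_mem_same 𝒰 hdec (hcase ▸ hγ)]
          have hsp : (monomial m x' : MvPolynomial (Fin k) R) • u₀ ∈ V' :=
            SetLike.le_def.mp le_sup_right
              (Submodule.smul_mem _ _ (Submodule.mem_span_singleton_self u₀))
          exact (Submodule.mem_toAddSubgroup _).mpr hsp
        · rw [MDproj_mem_ne 𝒰 hdec hcase hγ]
          exact V'.toAddSubgroup.zero_mem
    obtain ⟨L', hA', hB'⟩ := IH V' hVV' hGr'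
    -- elementary analysis of pieces contained in V' but not V
    have hkey : ∀ w n : ℕ, (∀ u ∈ 𝒰 (w, n), u ∈ V') → ∀ u ∈ 𝒰 (w, n), u ∉ V →
        ∃ (m : Fin k →₀ ℕ) (s : ℕ) (x' : R), x' ∈ 𝒜 s ∧
          (monomial m x' : MvPolynomial (Fin k) R) • u₀ ∉ V ∧
          w₀ + s + MDwdeg d m = w ∧ n₀ + MDndeg m = n := by
      intro w n hsub u hu huV
      obtain ⟨x, hx, z, hz, hdecomp⟩ := Submodule.mem_sup.mp (hsub u hu)
      obtain ⟨a, rfl⟩ := Submodule.mem_span_singleton.mp hz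
      have hproj : MDproj 𝒰 hdec (w, n) u = u := MDproj_mem_same 𝒰 hdec hu
      have heq : MDproj 𝒰 hdec (w, n) x + MDproj 𝒰 hdec (w, n) (a • u₀) = u := by
        rw [← map_add, hdecomp, hproj]
      have hprojx : MDproj 𝒰 hdec (w, n) x ∈ V := hGr x hx _
      have hnotV : MDproj 𝒰 hdec (w, n) (a • u₀) ∉ V := by
        intro hcon; exact huV (heq ▸ V.add_mem hprojx hcon)
      set Sδ : Set U := {y | ∃ (m : Fin k →₀ ℕ) (s : ℕ) (x' : R), x' ∈ 𝒜 s ∧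
        (monomial m x' : MvPolynomial (Fin k) R) • u₀ = y ∧
        w₀ + s + MDwdeg d m = w ∧ n₀ + MDndeg m = n} with hSδ
      have hmem2 : MDproj 𝒰 hdec (w, n) (a • u₀) ∈
          AddSubgroup.closure Sδ ⊔ V.toAddSubgroup := by
        have hmem3 := MD_smul_mem_of_elementary 𝒜 d 𝒰 hX hC u₀
          (AddSubgroup.comap (MDproj 𝒰 hdec (w, n))
            (AddSubgroup.closure Sδ ⊔ V.toAddSubgroup)) ?_ a
        · exact hmem3
        · intro m s x' hx'
          have hγ := MD_monomial_smul_mem 𝒜 d 𝒰 hX hC m s x' hx' w₀ n₀ u₀ hu₀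
          rw [AddSubgroup.mem_comap]
          by_cases hcase : ((w₀ + s + MDwdeg d m : ℕ), (n₀ + MDndeg m : ℕ)) = ((w, n) : ℕ × ℕ)
          · rw [MDproj_mem_same 𝒰 hdec (hcase ▸ hγ)]
            refine SetLike.le_def.mp le_sup_left (AddSubgroup.subset_closure ?_)
            exact ⟨m, s, x', hx', rfl, congrArg Prod.fst hcase, congrArg Prod.snd hcase⟩
          · rw [MDproj_mem_ne 𝒰 hdec hcase hγ]
            exact AddSubgroup.zero_mem _
      have hex : ∃ y ∈ Sδ, y ∉ V := by
        by_contra hcon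
        push_neg at hcon
        apply hnotV
        have hle : AddSubgroup.closure Sδ ⊔ V.toAddSubgroup ≤ V.toAddSubgroup := by
          refine sup_le ?_ le_rfl
          rw [AddSubgroup.closure_le]
          intro y hy; exact hcon y hy
        exact hle hmem2
      obtain ⟨y, ⟨m, s, x', hx', hyeq, hww, hnn⟩, hyV⟩ := hex
      exact ⟨m, s, x', hx', fun hcon => hyV (hyeq ▸ hcon), hww, hnn⟩
    by_cases hTe : ∃ i : Fin k, (X i : MvPolynomial (Fin k) R) • u₀ ∉ V
    · -- there is a variable with minimal weight not killing u₀
      obtain ⟨i₁, hi₁⟩ := hTe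
      obtain ⟨iS, hiSmem, hiSmin⟩ := Finset.exists_min_image
        (Finset.univ.filter fun i : Fin k => (X i : MvPolynomial (Fin k) R) • u₀ ∉ V) d
        ⟨i₁, by simp [hi₁]⟩
      have hiS : (X iS : MvPolynomial (Fin k) R) • u₀ ∉ V :=
        (Finset.mem_filter.mp hiSmem).2
      refine ⟨(w₀, n₀, some iS) :: L', ?_, ?_⟩
      · intro w n hwn
        by_cases hV'case : ∃ u ∈ 𝒰 (w, n), u ∉ V'
        · obtain ⟨c, hc, hc1, hc2⟩ := hA' w n hV'case
          exact ⟨c, List.mem_cons_of_mem _ hc, hc1, hc2⟩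
        · push_neg at hV'case
          obtain ⟨u, hu, huV⟩ := hwn
          obtain ⟨m, s, x', hx', hnotV, hww, hnn⟩ := hkey w n hV'case u hu huV
          have hsupp : ∀ i ∈ m.support, (X i : MvPolynomial (Fin k) R) • u₀ ∉ V := by
            intro i hi hXi
            exact hnotV (MD_monomial_smul_mem_of_X V u₀ i hXi m
              (Finsupp.mem_support_iff.mp hi) x')
          refine ⟨(w₀, n₀, some iS), List.mem_cons_self, ?_, by simp⟩
          intro i hi
          obtain rfl : iS = i := by simpa using hi
          have hwd : d iS * MDndeg m ≤ MDwdeg d m := by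
            rw [MDwdeg, MDndeg, Finsupp.sum, Finsupp.sum, Finset.mul_sum]
            refine Finset.sum_le_sum ?_
            intro i hi
            have hd : d iS ≤ d i := hiSmin i
              (Finset.mem_filter.mpr ⟨Finset.mem_univ i, hsupp i hi⟩)
            calc d iS * m i = m i * d iS := by ring
              _ ≤ m i * d i := Nat.mul_le_mul_left _ hd
          have h1 : (n : ℕ) - n₀ = MDndeg m := by omega
          simp only [h1]
          constructor
          · omega
          · omega
      · intro c hc i hi n hn
        rcases List.mem_cons.mp hc with hceq | hc'
        · subst hceq
          simp only at hi hn ⊢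
          obtain rfl : iS = i := by simpa using hi
          refine ⟨((X iS : MvPolynomial (Fin k) R) ^ (n - n₀)) • u₀, ?_, hpow iS hiS _⟩
          have hmem := MD_X_pow_smul_mem d 𝒰 hX iS (n - n₀) w₀ n₀ u₀ hu₀
          exact MD_mem_congr 𝒰 hmem (by ring) (by omega)
        · obtain ⟨u, hu, hu'⟩ := hB' c hc' i hi n hn
          exact ⟨u, hu, fun hcon => hu' (SetLike.le_def.mp (le_of_lt hVV') hcon)⟩
    · -- all variables send u₀ into V
      push_neg at hTe
      refine ⟨(w₀, n₀, none) :: L', ?_, ?_⟩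
      · intro w n hwn
        by_cases hV'case : ∃ u ∈ 𝒰 (w, n), u ∉ V'
        · obtain ⟨c, hc, hc1, hc2⟩ := hA' w n hV'case
          exact ⟨c, List.mem_cons_of_mem _ hc, hc1, hc2⟩
        · push_neg at hV'case
          obtain ⟨u, hu, huV⟩ := hwn
          obtain ⟨m, s, x', hx', hnotV, hww, hnn⟩ := hkey w n hV'case u hu huV
          have hm0 : m = 0 := by
            by_contra hm
            obtain ⟨i, hi⟩ := Finsupp.ne_iff.mp hm
            simp only [Finsupp.coe_zero, Pi.zero_apply] at hi
            exact hnotV (MD_monomial_smul_mem_of_X V u₀ i (hTe i) m hi x')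
          subst hm0
          refine ⟨(w₀, n₀, none), List.mem_cons_self, by simp, ?_⟩
          intro _
          show n = n₀
          have h2 : MDndeg (0 : Fin k →₀ ℕ) = 0 := by simp [MDndeg]
          omega
      · intro c hc i hi n hn
        rcases List.mem_cons.mp hc with hceq | hc'
        · subst hceq; simp at hi
        · obtain ⟨u, hu, hu'⟩ := hB' c hc' i hi n hn
          exact ⟨u, hu, fun hcon => hu' (SetLike.le_def.mp (le_of_lt hVV') hcon)⟩

end Cover

end Aux

/-- Every nonempty list has an element minimal for the lexicographic order on
`(f ·, g ·)`. -/
theorem MD_list_min {α : Type*} (f : α → ℕ) (g : α → ℤ) :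
    ∀ (l : List α), l ≠ [] →
      ∃ c ∈ l, ∀ c' ∈ l, f c < f c' ∨ (f c = f c' ∧ g c ≤ g c') := by
  intro l
  induction l with
  | nil => simp
  | cons a t ih =>
    intro _
    by_cases ht : t = []
    · subst ht
      refine ⟨a, by simp, ?_⟩
      intro c' hc'
      simp only [List.mem_singleton] at hc'
      subst hc'
      exact Or.inr ⟨rfl, le_rfl⟩
    · obtain ⟨c, hc, hmin⟩ := ih ht
      by_cases hcmp : f a < f c ∨ (f a = f c ∧ g a ≤ g c)
      · refine ⟨a, List.mem_cons_self, ?_⟩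
        intro c' hc'
        rcases List.mem_cons.mp hc' with rfl | hc't
        · exact Or.inr ⟨rfl, le_rfl⟩
        · have h3 := hmin c' hc't
          rcases hcmp with h1 | ⟨h1, h2⟩ <;> rcases h3 with h3 | ⟨h3, h4⟩
          · exact Or.inl (by omega)
          · exact Or.inl (by omega)
          · exact Or.inl (by omega)
          · exact Or.inr ⟨by omega, by omega⟩
      · refine ⟨c, List.mem_cons_of_mem _ hc, ?_⟩
        intro c' hc'
        rcases List.mem_cons.mp hc' with rfl | hc't
        · push_neg at hcmp
          rcases Nat.lt_or_ge (f c) (f c') with h1 | h1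
          · exact Or.inl h1
          · have h2 : f c = f c' := by omega
            refine Or.inr ⟨h2, ?_⟩
            have h4 := hcmp.2 h2.symm
            omega
        · exact hmin c' hc't

/-- Let `R` be a finitely generated `ℕ`-graded algebra over a Noetherian ring
`R₀`, and let `A = R[y₁, …, y_k]` (formalized as `MvPolynomial (Fin k) R`) be bigraded by
`deg yᵢ = (dᵢ, 1)` and `deg x = (s, 0)` for `x ∈ R_s`. Let `U` be a finitely generated
bigraded `A`-module: `U` decomposes as an internal direct sum of `R₀`-submodules
`𝒰 (w, n)`, with `C x • 𝒰 (w, n) ⊆ 𝒰 (w + s, n)` for `x ∈ R_s` and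
`yᵢ • 𝒰 (w, n) ⊆ 𝒰 (w + dᵢ, n + 1)`. Assume that for all sufficiently large `n` there is
some `w` with `U_{(w,n)} ≠ 0`. Then `n ↦ min {w | U_{(w,n)} ≠ 0}` is eventually linear in
`n` with leading coefficient among `d₁, …, d_k`. -/
theorem min_degree_bigraded_module_eventually_linear
    {R₀ R : Type*} [CommRing R₀] [IsNoetherianRing R₀]
    [CommRing R] [Algebra R₀ R] [Algebra.FiniteType R₀ R]
    (𝒜 : ℕ → Submodule R₀ R) [GradedAlgebra 𝒜]
    (k : ℕ) (d : Fin k → ℕ)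
    (U : Type*) [AddCommGroup U] [Module R₀ U]
    [Module (MvPolynomial (Fin k) R) U]
    [IsScalarTower R₀ (MvPolynomial (Fin k) R) U]
    [Module.Finite (MvPolynomial (Fin k) R) U]
    (𝒰 : ℕ × ℕ → Submodule R₀ U)
    (hdec : DirectSum.IsInternal 𝒰)
    (hC : ∀ (s : ℕ) (x : R), x ∈ 𝒜 s → ∀ (w n : ℕ) (u : U), u ∈ 𝒰 (w, n) →
      (MvPolynomial.C x : MvPolynomial (Fin k) R) • u ∈ 𝒰 (w + s, n))
    (hX : ∀ (i : Fin k) (w n : ℕ) (u : U), u ∈ 𝒰 (w, n) →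
      (MvPolynomial.X i : MvPolynomial (Fin k) R) • u ∈ 𝒰 (w + d i, n + 1))
    (N : ℕ) (hne : ∀ n, N ≤ n → ∃ w, 𝒰 (w, n) ≠ ⊥) :
    ∃ (n₀ : ℕ) (i : Fin k) (b : ℤ), ∀ n, n₀ ≤ n →
      ((sInf {w : ℕ | 𝒰 (w, n) ≠ ⊥} : ℕ) : ℤ) = (d i : ℤ) * n + b := by
  classical
  haveI : IsNoetherianRing R := Algebra.FiniteType.isNoetherianRing R₀ R
  have hGr0 : ∀ v ∈ (⊥ : Submodule (MvPolynomial (Fin k) R) U), ∀ δ : ℕ × ℕ,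
      MDproj 𝒰 hdec δ v ∈ (⊥ : Submodule (MvPolynomial (Fin k) R) U) := by
    intro v hv δ
    rw [Submodule.mem_bot] at hv
    subst hv
    rw [map_zero]
    exact Submodule.zero_mem _
  obtain ⟨L, hA, hB⟩ := MD_cover 𝒜 d 𝒰 hX hC hdec ⊥ hGr0
  -- translate non-bottomness
  have hnb : ∀ w n : ℕ, 𝒰 (w, n) ≠ ⊥ ↔
      (∃ u ∈ 𝒰 (w, n), u ∉ (⊥ : Submodule (MvPolynomial (Fin k) R) U)) := by
    intro w n
    rw [Submodule.ne_bot_iff]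
    constructor
    · rintro ⟨u, hu, hu0⟩
      exact ⟨u, hu, fun hc => hu0 (Submodule.mem_bot _ |>.mp hc)⟩
    · rintro ⟨u, hu, hu0⟩
      exact ⟨u, hu, fun hc => hu0 (Submodule.mem_bot _ |>.mpr hc)⟩
  -- row bound
  set B1 : ℕ := (L.map fun c => c.2.1).sum + 1 with hB1
  have hrow : ∀ c ∈ L, c.2.1 < B1 := by
    intro c hc
    have : c.2.1 ≤ (L.map fun c => c.2.1).sum :=
      List.le_sum_of_mem (List.mem_map_of_mem hc)
    omega
  -- the list of genuine cones
  set J : List (ℕ × ℕ × Fin k) :=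
    L.filterMap (fun c => c.2.2.map (fun i => (c.1, c.2.1, i))) with hJ
  have hJmem : ∀ c' : ℕ × ℕ × Fin k, c' ∈ J ↔
      ∃ c ∈ L, c.2.2 = some c'.2.2 ∧ c.1 = c'.1 ∧ c.2.1 = c'.2.1 := by
    intro c'
    rw [hJ, List.mem_filterMap]
    constructor
    · rintro ⟨c, hc, hmap⟩
      rcases Option.map_eq_some_iff.mp hmap with ⟨i, hi, hieq⟩
      refine ⟨c, hc, ?_, ?_, ?_⟩
      · rw [hi, ← hieq]
      · rw [← hieq]
      · rw [← hieq]
    · rintro ⟨c, hc, h1, h2, h3⟩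
      refine ⟨c, hc, ?_⟩
      rw [h1, Option.map_some]
      obtain ⟨a1, a2, a3⟩ := c'
      simp only at h2 h3 ⊢
      rw [h2, h3]
  -- cone realization
  have hJb : ∀ c' ∈ J, ∀ n : ℕ, c'.2.1 ≤ n →
      𝒰 (c'.1 + d c'.2.2 * (n - c'.2.1), n) ≠ ⊥ := by
    intro c' hc' n hn
    obtain ⟨c, hc, h1, h2, h3⟩ := (hJmem c').mp hc'
    rw [hnb]
    have := hB c hc c'.2.2 h1 n (by omega)
    rw [h2, h3] at this
    exact this
  -- cone covering
  have hJa : ∀ w n : ℕ, B1 ≤ n → 𝒰 (w, n) ≠ ⊥ →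
      ∃ c' ∈ J, c'.2.1 ≤ n ∧ c'.1 + d c'.2.2 * (n - c'.2.1) ≤ w := by
    intro w n hBn hwn
    obtain ⟨c, hc, h1, h2⟩ := hA w n ((hnb w n).mp hwn)
    rcases hopt : c.2.2 with _ | i
    · exfalso
      have := h2 hopt
      have := hrow c hc
      omega
    · refine ⟨(c.1, c.2.1, i), (hJmem _).mpr ⟨c, hc, by simpa using hopt, rfl, rfl⟩, ?_⟩
      exact h1 i hopt
  -- J is nonempty
  have hJne : J ≠ [] := by
    obtain ⟨w, hw⟩ := hne (max N B1) (le_max_left _ _)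
    obtain ⟨c', hc', _⟩ := hJa w (max N B1) (le_max_right _ _) hw
    exact List.ne_nil_of_mem hc'
  -- lexicographically minimal cone
  obtain ⟨cm, hcmJ, hcmmin⟩ := MD_list_min (fun c' => d c'.2.2)
    (fun c' => (c'.1 : ℤ) - (d c'.2.2 : ℤ) * c'.2.1) J hJne
  set bm : ℤ := (cm.1 : ℤ) - (d cm.2.2 : ℤ) * cm.2.1 with hbm
  -- the threshold
  set n₀ : ℕ := N + B1 + cm.2.1 +
    (J.map (fun c' => (bm - ((c'.1 : ℤ) - (d c'.2.2 : ℤ) * c'.2.1)).toNat + c'.2.1)).sum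
    with hn₀
  refine ⟨n₀, cm.2.2, bm, ?_⟩
  intro n hn
  have hthresh : ∀ c' ∈ J,
      (bm - ((c'.1 : ℤ) - (d c'.2.2 : ℤ) * c'.2.1)).toNat ≤ n ∧ c'.2.1 ≤ n := by
    intro c' hc'
    have : (bm - ((c'.1 : ℤ) - (d c'.2.2 : ℤ) * c'.2.1)).toNat + c'.2.1 ≤
        (J.map (fun c' => (bm - ((c'.1 : ℤ) - (d c'.2.2 : ℤ) * c'.2.1)).toNat + c'.2.1)).sum :=
      List.le_sum_of_mem (List.mem_map_of_mem hc')
    omega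
  set v : ℕ := cm.1 + d cm.2.2 * (n - cm.2.1) with hv
  have hvmem : 𝒰 (v, n) ≠ ⊥ := hJb cm hcmJ n (by omega)
  have hvcast : (v : ℤ) = (d cm.2.2 : ℤ) * n + bm := by
    have h1 : cm.2.1 ≤ n := by omega
    rw [hv, hbm]
    push_cast [Nat.cast_sub h1]
    ring
  have hlow : ∀ w ∈ {w : ℕ | 𝒰 (w, n) ≠ ⊥}, v ≤ w := by
    intro w hw
    simp only [Set.mem_setOf_eq] at hw
    obtain ⟨c', hc'J, hc'le, hc'w⟩ := hJa w n (by omega) hw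
    have hccast : ((c'.1 + d c'.2.2 * (n - c'.2.1) : ℕ) : ℤ) =
        (d c'.2.2 : ℤ) * n + ((c'.1 : ℤ) - (d c'.2.2 : ℤ) * c'.2.1) := by
      push_cast [Nat.cast_sub hc'le]
      ring
    have hkey : (v : ℤ) ≤ ((c'.1 + d c'.2.2 * (n - c'.2.1) : ℕ) : ℤ) := by
      rw [hvcast, hccast]
      rcases hcmmin c' hc'J with h1 | ⟨h1, h2⟩
      · -- strictly smaller slope
        have h2 : (d cm.2.2 : ℤ) + 1 ≤ (d c'.2.2 : ℤ) := by exact_mod_cast h1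
        have h3 : (0 : ℤ) ≤ (n : ℤ) := by positivity
        have h4 : ((d cm.2.2 : ℤ) + 1) * n ≤ (d c'.2.2 : ℤ) * n :=
          mul_le_mul_of_nonneg_right h2 h3
        have h5 : bm - ((c'.1 : ℤ) - (d c'.2.2 : ℤ) * c'.2.1) ≤ (n : ℤ) := by
          have h6 := (hthresh c' hc'J).1
          have h7 := Int.self_le_toNat (bm - ((c'.1 : ℤ) - (d c'.2.2 : ℤ) * c'.2.1))
          have h8 : ((bm - ((c'.1 : ℤ) - (d c'.2.2 : ℤ) * c'.2.1)).toNat : ℤ) ≤ (n : ℤ) := by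
            exact_mod_cast h6
          omega
        nlinarith
      · rw [h1]
        omega
    have := (Nat.cast_le (α := ℤ)).mp hkey
    omega
  have hinf : sInf {w : ℕ | 𝒰 (w, n) ≠ ⊥} = v :=
    le_antisymm (Nat.sInf_le hvmem) (le_csInf ⟨v, hvmem⟩ hlow)
  rw [hinf, hvcast]
end
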